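/- Let Q be a doubly ruled quadric in P³ containing pairwise skew lines A(0,0), A(1,0), A(0,1) of one ruling family. For any point p on Q not on these lines there is a unique line B of the other ruling family through p, and B meets A(0,0) in a point b. The map p ↦ b has the property: two points p ∈ C₁ and q ∈ C₂ (on plane sections C₁, C₂ of Q) correspond under the projection from center A(0,1) (i.e., q = (p ∨ A(0,1)) ∩ C₂ appropriately interpreted) if and only if they determine the same point b on A(0,0). -/

import Mathlib

open Submodule

abbrev Subsp (K : Type*) [Field K] := Submodule K (Fin 4 → K)

variable {K : Type*} [Field K]

def isPoint (S : Subsp K) : Prop := Module.finrank K ↥S = 1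
def isLine  (S : Subsp K) : Prop := Module.finrank K ↥S = 2
def isPlane (S : Subsp K) : Prop := Module.finrank K ↥S = 3
def skew (L M : Subsp K) : Prop := L ⊓ M = ⊥
def meets (L M : Subsp K) : Prop := L ⊓ M ≠ ⊥
/-- Lines meeting the three lines A, B, C. -/
def transv3 (A B C : Subsp K) : Set (Subsp K) :=
  {T | isLine T ∧ meets T A ∧ meets T B ∧ meets T C}

/-- The regulus spanned by the three pairwise skew lines A, B, C: all lines
meeting every common transversal of A, B, C. -/
def reg3 (A B C : Subsp K) : Set (Subsp K) :=
  {L | isLine L ∧ ∀ T ∈ transv3 A B C, meets L T}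

/-- The points of the doubly ruled quadric through A, B, C. -/
def quadPts (A B C : Subsp K) : Set (Subsp K) :=
  {p | isPoint p ∧ ∃ L ∈ reg3 A B C, p ≤ L}

section Helpers
variable {K : Type*} [Field K]

lemma auxQ_finrank_span_pair {u v : Fin 4 → K}
    (h : ∀ a b : K, a • u + b • v = 0 → a = 0 ∧ b = 0) :
    Module.finrank K ↥(span K {u, v}) = 2 := by
  have hli : LinearIndependent K ![u, v] := LinearIndependent.pair_iff.2 fun a b hab => h a b hab
  have := finrank_span_eq_card hli
  have hr : Set.range ![u, v] = {u, v} := by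
    rw [Matrix.range_cons, Matrix.range_cons, Matrix.range_empty]
    simp [Set.pair_comm]
  rw [hr] at this
  simpa using this

lemma auxQ_point_exists {p : Subsp K} (hp : isPoint p) : ∃ x ∈ p, x ≠ 0 := by
  have : p ≠ ⊥ := by
    intro h
    rw [isPoint, h, finrank_bot] at hp
    omega
  exact (Submodule.ne_bot_iff p).1 this

lemma auxQ_point_eq_span {p : Subsp K} {x : Fin 4 → K} (hp : isPoint p) (hx : x ∈ p)
    (hx0 : x ≠ 0) : p = K ∙ x := by
  symm
  apply Submodule.eq_of_le_of_finrank_eq ((span_singleton_le_iff_mem x p).2 hx)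
  rw [finrank_span_singleton hx0, hp]

lemma auxQ_span_pair_smul_right {u v : Fin 4 → K} {k : K} (hk : k ≠ 0) :
    span K {u, k • v} = span K {u, v} := by
  have : ({u, k • v} : Set (Fin 4 → K)) = insert u {k • v} := rfl
  rw [this, span_insert, span_singleton_smul_eq (isUnit_iff_ne_zero.2 hk),
    show ({u, v} : Set (Fin 4 → K)) = insert u {v} from rfl, span_insert]

lemma auxQ_span_pair_smul_both {u v : Fin 4 → K} {k : K} (hk : k ≠ 0) :
    span K {k • u, k • v} = span K {u, v} := by
  rw [auxQ_span_pair_smul_right hk, show ({k • u, v} : Set (Fin 4 → K)) = insert (k • u) {v} from rfl,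
    span_insert, span_singleton_smul_eq (isUnit_iff_ne_zero.2 hk),
    show ({u, v} : Set (Fin 4 → K)) = insert u {v} from rfl, span_insert]

end Helpers

section Frame
variable {K : Type*} [Field K]

/-- The transversal line through parameter `(s,t)` in the adapted frame. -/
def auxQ_T (e0 e1 f0 f1 : Fin 4 → K) (s t : K) : Subsp K :=
  span K {s • e0 + t • e1, s • f0 + t • f1}

variable {e0 e1 f0 f1 : Fin 4 → K}

lemma auxQ_vec_inj
    (hind : ∀ a b c d : K, a • e0 + b • e1 + c • f0 + d • f1 = 0 → a = 0 ∧ b = 0 ∧ c = 0 ∧ d = 0)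
    {a b c d a' b' c' d' : K}
    (h : a • e0 + b • e1 + c • f0 + d • f1 = a' • e0 + b' • e1 + c' • f0 + d' • f1) :
    a = a' ∧ b = b' ∧ c = c' ∧ d = d' := by
  have h0 : (a - a') • e0 + (b - b') • e1 + (c - c') • f0 + (d - d') • f1 =
      (a • e0 + b • e1 + c • f0 + d • f1) - (a' • e0 + b' • e1 + c' • f0 + d' • f1) := by
    module
  rw [h, sub_self] at h0
  obtain ⟨h1, h2, h3, h4⟩ := hind _ _ _ _ h0
  exact ⟨sub_eq_zero.1 h1, sub_eq_zero.1 h2, sub_eq_zero.1 h3, sub_eq_zero.1 h4⟩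

lemma auxQ_vec_ne_zero
    (hind : ∀ a b c d : K, a • e0 + b • e1 + c • f0 + d • f1 = 0 → a = 0 ∧ b = 0 ∧ c = 0 ∧ d = 0)
    {a b c d : K} (h : ¬ (a = 0 ∧ b = 0 ∧ c = 0 ∧ d = 0)) :
    a • e0 + b • e1 + c • f0 + d • f1 ≠ 0 :=
  fun h0 => h (hind _ _ _ _ h0)

lemma auxQ_mem_T_iff {s t : K} {x : Fin 4 → K} :
    x ∈ auxQ_T e0 e1 f0 f1 s t ↔
      ∃ a b : K, x = (a * s) • e0 + (a * t) • e1 + (b * s) • f0 + (b * t) • f1 := by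
  rw [auxQ_T, mem_span_pair]
  constructor
  · rintro ⟨a, b, rfl⟩
    exact ⟨a, b, by module⟩
  · rintro ⟨a, b, rfl⟩
    exact ⟨a, b, by module⟩

lemma auxQ_gen_ne_zero
    (hind : ∀ a b c d : K, a • e0 + b • e1 + c • f0 + d • f1 = 0 → a = 0 ∧ b = 0 ∧ c = 0 ∧ d = 0)
    {s t : K} (hst : s ≠ 0 ∨ t ≠ 0) : s • e0 + t • e1 ≠ 0 := by
  intro h
  have : s • e0 + t • e1 + (0:K) • f0 + (0:K) • f1 = 0 := by rw [show s • e0 + t • e1 + (0:K) • f0 + (0:K) • f1 = s • e0 + t • e1 by module, h]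
  obtain ⟨h1, h2, -, -⟩ := hind _ _ _ _ this
  rcases hst with h' | h' <;> exact h' (by assumption)

lemma auxQ_genf_ne_zero
    (hind : ∀ a b c d : K, a • e0 + b • e1 + c • f0 + d • f1 = 0 → a = 0 ∧ b = 0 ∧ c = 0 ∧ d = 0)
    {s t : K} (hst : s ≠ 0 ∨ t ≠ 0) : s • f0 + t • f1 ≠ 0 := by
  intro h
  have : (0:K) • e0 + (0:K) • e1 + s • f0 + t • f1 = 0 := by rw [show (0:K) • e0 + (0:K) • e1 + s • f0 + t • f1 = s • f0 + t • f1 by module, h]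
  obtain ⟨-, -, h1, h2⟩ := hind _ _ _ _ this
  rcases hst with h' | h' <;> exact h' (by assumption)

/-- Scaling the parameter of a transversal does not change it. -/
lemma auxQ_T_smul {s t k : K} (hk : k ≠ 0) :
    auxQ_T e0 e1 f0 f1 (k * s) (k * t) = auxQ_T e0 e1 f0 f1 s t := by
  rw [auxQ_T, auxQ_T,
    show (k * s) • e0 + (k * t) • e1 = k • (s • e0 + t • e1) by module,
    show (k * s) • f0 + (k * t) • f1 = k • (s • f0 + t • f1) by module,
    auxQ_span_pair_smul_both hk]

end Frame

section Transv
variable {K : Type*} [Field K] {e0 e1 f0 f1 : Fin 4 → K} {A00 A10 A01 : Subsp K}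

lemma auxQ_transv_iff
    (hind : ∀ a b c d : K, a • e0 + b • e1 + c • f0 + d • f1 = 0 → a = 0 ∧ b = 0 ∧ c = 0 ∧ d = 0)
    (hA00 : A00 = span K {e0, e1}) (hA10 : A10 = span K {f0, f1})
    (hA01 : A01 = span K {e0 + f0, e1 + f1}) {T : Subsp K} :
    T ∈ transv3 A00 A10 A01 ↔ ∃ s t : K, (s ≠ 0 ∨ t ≠ 0) ∧ T = auxQ_T e0 e1 f0 f1 s t := by
  constructor
  · rintro ⟨hTline, hT0, hT1, hT2⟩
    obtain ⟨u, hum, hu0⟩ := (Submodule.ne_bot_iff _).1 hT0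
    obtain ⟨huT, huA⟩ := Submodule.mem_inf.1 hum
    obtain ⟨v, hvm, hv0⟩ := (Submodule.ne_bot_iff _).1 hT1
    obtain ⟨hvT, hvA⟩ := Submodule.mem_inf.1 hvm
    obtain ⟨w, hwm, hw0⟩ := (Submodule.ne_bot_iff _).1 hT2
    obtain ⟨hwT, hwA⟩ := Submodule.mem_inf.1 hwm
    rw [hA00, mem_span_pair] at huA
    obtain ⟨s, t, rfl⟩ := huA
    rw [hA10, mem_span_pair] at hvA
    obtain ⟨c, d, rfl⟩ := hvA
    rw [hA01, mem_span_pair] at hwA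
    obtain ⟨m, n, rfl⟩ := hwA
    have hst : s ≠ 0 ∨ t ≠ 0 := by
      by_contra h
      push_neg at h
      exact hu0 (by rw [h.1, h.2]; module)
    have hcd : c ≠ 0 ∨ d ≠ 0 := by
      by_contra h
      push_neg at h
      exact hv0 (by rw [h.1, h.2]; module)
    have hmn : m ≠ 0 ∨ n ≠ 0 := by
      by_contra h
      push_neg at h
      exact hw0 (by rw [h.1, h.2]; module)
    have hindep : ∀ α β : K, α • (s • e0 + t • e1) + β • (c • f0 + d • f1) = 0 → α = 0 ∧ β = 0 := by
      intro α β h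
      have h' : (α * s) • e0 + (α * t) • e1 + (β * c) • f0 + (β * d) • f1 = 0 := by
        rw [show (α * s) • e0 + (α * t) • e1 + (β * c) • f0 + (β * d) • f1 =
          α • (s • e0 + t • e1) + β • (c • f0 + d • f1) by module, h]
      obtain ⟨h1, h2, h3, h4⟩ := hind _ _ _ _ h'
      constructor
      · rcases hst with h' | h'
        · exact (mul_eq_zero.1 h1).resolve_right h'
        · exact (mul_eq_zero.1 h2).resolve_right h'
      · rcases hcd with h' | h'
        · exact (mul_eq_zero.1 h3).resolve_right h'
        · exact (mul_eq_zero.1 h4).resolve_right h'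
    have hTspan : T = span K {s • e0 + t • e1, c • f0 + d • f1} := by
      symm
      apply Submodule.eq_of_le_of_finrank_eq
      · rw [span_le]
        rintro x (rfl | rfl)
        · exact huT
        · exact hvT
      · rw [auxQ_finrank_span_pair hindep, hTline]
    rw [hTspan, mem_span_pair] at hwT
    obtain ⟨α, β, hw⟩ := hwT
    have hcoord : (α * s) • e0 + (α * t) • e1 + (β * c) • f0 + (β * d) • f1 =
        m • e0 + n • e1 + m • f0 + n • f1 := by
      calc (α * s) • e0 + (α * t) • e1 + (β * c) • f0 + (β * d) • f1
          = α • (s • e0 + t • e1) + β • (c • f0 + d • f1) := by module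
        _ = m • (e0 + f0) + n • (e1 + f1) := hw
        _ = m • e0 + n • e1 + m • f0 + n • f1 := by module
    obtain ⟨h1, h2, h3, h4⟩ := auxQ_vec_inj hind hcoord
    have hα : α ≠ 0 := by
      rintro rfl
      rcases hmn with h' | h'
      · exact h' (by rw [← h1]; ring)
      · exact h' (by rw [← h2]; ring)
    have hβ : β ≠ 0 := by
      rintro rfl
      rcases hmn with h' | h'
      · exact h' (by rw [← h3]; ring)
      · exact h' (by rw [← h4]; ring)
    refine ⟨s, t, hst, ?_⟩
    rw [hTspan, auxQ_T]
    have hc : c = (α / β) * s := by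
      field_simp
      linear_combination h3 - h1
    have hd : d = (α / β) * t := by
      field_simp
      linear_combination h4 - h2
    rw [hc, hd, show ((α / β) * s) • f0 + ((α / β) * t) • f1 = (α / β) • (s • f0 + t • f1) by module,
      auxQ_span_pair_smul_right (div_ne_zero hα hβ)]
  · rintro ⟨s, t, hst, rfl⟩
    have hgen1 : s • e0 + t • e1 ∈ auxQ_T e0 e1 f0 f1 s t :=
      subset_span (Set.mem_insert _ _)
    have hgen2 : s • f0 + t • f1 ∈ auxQ_T e0 e1 f0 f1 s t :=
      subset_span (Set.mem_insert_iff.2 (Or.inr rfl))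
    refine ⟨?_, ?_, ?_, ?_⟩
    · apply auxQ_finrank_span_pair
      intro α β h
      have h' : (α * s) • e0 + (α * t) • e1 + (β * s) • f0 + (β * t) • f1 = 0 := by
        rw [show (α * s) • e0 + (α * t) • e1 + (β * s) • f0 + (β * t) • f1 =
          α • (s • e0 + t • e1) + β • (s • f0 + t • f1) by module, h]
      obtain ⟨h1, h2, h3, h4⟩ := hind _ _ _ _ h'
      rcases hst with h' | h'
      · exact ⟨(mul_eq_zero.1 h1).resolve_right h', (mul_eq_zero.1 h3).resolve_right h'⟩
      · exact ⟨(mul_eq_zero.1 h2).resolve_right h', (mul_eq_zero.1 h4).resolve_right h'⟩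
    · exact (Submodule.ne_bot_iff _).2 ⟨s • e0 + t • e1,
        Submodule.mem_inf.2 ⟨hgen1, hA00 ▸ mem_span_pair.2 ⟨s, t, rfl⟩⟩,
        auxQ_gen_ne_zero hind hst⟩
    · exact (Submodule.ne_bot_iff _).2 ⟨s • f0 + t • f1,
        Submodule.mem_inf.2 ⟨hgen2, hA10 ▸ mem_span_pair.2 ⟨s, t, rfl⟩⟩,
        auxQ_genf_ne_zero hind hst⟩
    · refine (Submodule.ne_bot_iff _).2 ⟨s • (e0 + f0) + t • (e1 + f1),
        Submodule.mem_inf.2 ⟨?_, hA01 ▸ mem_span_pair.2 ⟨s, t, rfl⟩⟩, ?_⟩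
      · rw [show s • (e0 + f0) + t • (e1 + f1) = (s • e0 + t • e1) + (s • f0 + t • f1) by module]
        exact add_mem hgen1 hgen2
      · rw [show s • (e0 + f0) + t • (e1 + f1) = s • e0 + t • e1 + s • f0 + t • f1 by module]
        apply auxQ_vec_ne_zero hind
        rcases hst with h' | h' <;> tauto

end Transv

section Reg
variable {K : Type*} [Field K] {e0 e1 f0 f1 : Fin 4 → K} {A00 A10 A01 : Subsp K}

lemma auxQ_reg_char
    (hind : ∀ a b c d : K, a • e0 + b • e1 + c • f0 + d • f1 = 0 → a = 0 ∧ b = 0 ∧ c = 0 ∧ d = 0)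
    (hA00 : A00 = span K {e0, e1}) (hA10 : A10 = span K {f0, f1})
    (hA01 : A01 = span K {e0 + f0, e1 + f1}) {L : Subsp K}
    (hL : L ∈ reg3 A00 A10 A01) :
    ∃ l m : K, (l ≠ 0 ∨ m ≠ 0) ∧ L = span K {l • e0 + m • f0, l • e1 + m • f1} := by
  obtain ⟨hLline, hmeet⟩ := hL
  have hT10 : auxQ_T e0 e1 f0 f1 1 0 ∈ transv3 A00 A10 A01 :=
    (auxQ_transv_iff hind hA00 hA10 hA01).2 ⟨1, 0, Or.inl one_ne_zero, rfl⟩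
  have hT01 : auxQ_T e0 e1 f0 f1 0 1 ∈ transv3 A00 A10 A01 :=
    (auxQ_transv_iff hind hA00 hA10 hA01).2 ⟨0, 1, Or.inr one_ne_zero, rfl⟩
  have hT11 : auxQ_T e0 e1 f0 f1 1 1 ∈ transv3 A00 A10 A01 :=
    (auxQ_transv_iff hind hA00 hA10 hA01).2 ⟨1, 1, Or.inl one_ne_zero, rfl⟩
  obtain ⟨u, hum, hu0⟩ := (Submodule.ne_bot_iff _).1 (hmeet _ hT10)
  obtain ⟨huL, huT⟩ := Submodule.mem_inf.1 hum
  obtain ⟨v, hvm, hv0⟩ := (Submodule.ne_bot_iff _).1 (hmeet _ hT01)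
  obtain ⟨hvL, hvT⟩ := Submodule.mem_inf.1 hvm
  obtain ⟨w, hwm, hw0⟩ := (Submodule.ne_bot_iff _).1 (hmeet _ hT11)
  obtain ⟨hwL, hwT⟩ := Submodule.mem_inf.1 hwm
  obtain ⟨a, b, hu⟩ := auxQ_mem_T_iff.1 huT
  obtain ⟨c, d, hv⟩ := auxQ_mem_T_iff.1 hvT
  obtain ⟨a', b', hw⟩ := auxQ_mem_T_iff.1 hwT
  have hu' : u = a • e0 + b • f0 := by rw [hu]; module
  have hv' : v = c • e1 + d • f1 := by rw [hv]; module
  have hw' : w = a' • e0 + a' • e1 + b' • f0 + b' • f1 := by rw [hw]; module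
  have hab : a ≠ 0 ∨ b ≠ 0 := by
    by_contra h
    push_neg at h
    exact hu0 (by rw [hu', h.1, h.2]; module)
  have hcd : c ≠ 0 ∨ d ≠ 0 := by
    by_contra h
    push_neg at h
    exact hv0 (by rw [hv', h.1, h.2]; module)
  have hab' : a' ≠ 0 ∨ b' ≠ 0 := by
    by_contra h
    push_neg at h
    exact hw0 (by rw [hw', h.1, h.2]; module)
  have hindep : ∀ α β : K, α • (a • e0 + b • f0) + β • (c • e1 + d • f1) = 0 → α = 0 ∧ β = 0 := by
    intro α β h
    have h' : (α * a) • e0 + (β * c) • e1 + (α * b) • f0 + (β * d) • f1 = 0 := by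
      rw [show (α * a) • e0 + (β * c) • e1 + (α * b) • f0 + (β * d) • f1 =
        α • (a • e0 + b • f0) + β • (c • e1 + d • f1) by module, h]
    obtain ⟨h1, h2, h3, h4⟩ := hind _ _ _ _ h'
    constructor
    · rcases hab with h' | h'
      · exact (mul_eq_zero.1 h1).resolve_right h'
      · exact (mul_eq_zero.1 h3).resolve_right h'
    · rcases hcd with h' | h'
      · exact (mul_eq_zero.1 h2).resolve_right h'
      · exact (mul_eq_zero.1 h4).resolve_right h'
  have hLspan : L = span K {a • e0 + b • f0, c • e1 + d • f1} := by
    symm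
    apply Submodule.eq_of_le_of_finrank_eq
    · rw [span_le]
      rintro x (rfl | rfl)
      · exact hu' ▸ huL
      · exact hv' ▸ hvL
    · rw [auxQ_finrank_span_pair hindep, hLline]
  rw [hLspan, mem_span_pair] at hwL
  obtain ⟨α, β, hwe⟩ := hwL
  have hcoord : (α * a) • e0 + (β * c) • e1 + (α * b) • f0 + (β * d) • f1 =
      a' • e0 + a' • e1 + b' • f0 + b' • f1 := by
    calc (α * a) • e0 + (β * c) • e1 + (α * b) • f0 + (β * d) • f1
        = α • (a • e0 + b • f0) + β • (c • e1 + d • f1) := by module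
      _ = w := hwe
      _ = a' • e0 + a' • e1 + b' • f0 + b' • f1 := hw'
  obtain ⟨h1, h2, h3, h4⟩ := auxQ_vec_inj hind hcoord
  have hα : α ≠ 0 := by
    rintro rfl
    rcases hab' with h' | h'
    · exact h' (by rw [← h1]; ring)
    · exact h' (by rw [← h3]; ring)
  have hβ : β ≠ 0 := by
    rintro rfl
    rcases hab' with h' | h'
    · exact h' (by rw [← h2]; ring)
    · exact h' (by rw [← h4]; ring)
  refine ⟨a, b, hab, ?_⟩
  rw [hLspan]
  have hc : c = (α / β) * a := by
    field_simp
    linear_combination h2 - h1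
  have hd : d = (α / β) * b := by
    field_simp
    linear_combination h4 - h3
  rw [hc, hd, show ((α / β) * a) • e1 + ((α / β) * b) • f1 = (α / β) • (a • e1 + b • f1) by module,
    auxQ_span_pair_smul_right (div_ne_zero hα hβ)]

end Reg

section Points
variable {K : Type*} [Field K] {e0 e1 f0 f1 : Fin 4 → K} {A00 A10 A01 : Subsp K}

/-- A point of the quadric lies on some transversal. -/
lemma auxQ_quad_point_rep
    (hind : ∀ a b c d : K, a • e0 + b • e1 + c • f0 + d • f1 = 0 → a = 0 ∧ b = 0 ∧ c = 0 ∧ d = 0)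
    (hA00 : A00 = span K {e0, e1}) (hA10 : A10 = span K {f0, f1})
    (hA01 : A01 = span K {e0 + f0, e1 + f1}) {p : Subsp K}
    (hp : p ∈ quadPts A00 A10 A01) :
    ∃ s t : K, (s ≠ 0 ∨ t ≠ 0) ∧ p ≤ auxQ_T e0 e1 f0 f1 s t := by
  obtain ⟨hpt, L, hL, hpL⟩ := hp
  obtain ⟨l, m, hlm, rfl⟩ := auxQ_reg_char hind hA00 hA10 hA01 hL
  obtain ⟨x, hxp, hx0⟩ := auxQ_point_exists hpt
  obtain ⟨s, t, hx⟩ := mem_span_pair.1 (hpL hxp)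
  have hst : s ≠ 0 ∨ t ≠ 0 := by
    by_contra h
    push_neg at h
    exact hx0 (by rw [← hx, h.1, h.2]; module)
  refine ⟨s, t, hst, ?_⟩
  rw [auxQ_point_eq_span hpt hxp hx0, span_singleton_le_iff_mem]
  exact auxQ_mem_T_iff.2 ⟨l, m, by rw [← hx]; module⟩

/-- Two transversals through a common nonzero vector coincide. -/
lemma auxQ_transv_unique
    (hind : ∀ a b c d : K, a • e0 + b • e1 + c • f0 + d • f1 = 0 → a = 0 ∧ b = 0 ∧ c = 0 ∧ d = 0)
    {s t s' t' : K} (hst : s ≠ 0 ∨ t ≠ 0) (hst' : s' ≠ 0 ∨ t' ≠ 0) {x : Fin 4 → K}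
    (hx0 : x ≠ 0) (h1 : x ∈ auxQ_T e0 e1 f0 f1 s t) (h2 : x ∈ auxQ_T e0 e1 f0 f1 s' t') :
    auxQ_T e0 e1 f0 f1 s t = auxQ_T e0 e1 f0 f1 s' t' := by
  obtain ⟨a, b, hx1⟩ := auxQ_mem_T_iff.1 h1
  obtain ⟨a', b', hx2⟩ := auxQ_mem_T_iff.1 h2
  obtain ⟨e1', e2', e3', e4'⟩ := auxQ_vec_inj hind (hx1.symm.trans hx2)
  have hab : a ≠ 0 ∨ b ≠ 0 := by
    by_contra h
    push_neg at h
    exact hx0 (by rw [hx1, h.1, h.2]; module)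
  have key : ∀ g g' : K, g ≠ 0 → g * s = g' * s' → g * t = g' * t' →
      auxQ_T e0 e1 f0 f1 s t = auxQ_T e0 e1 f0 f1 s' t' := by
    intro g g' hg hgs hgt
    have hg' : g' ≠ 0 := by
      rintro rfl
      rcases hst with h' | h'
      · rw [zero_mul] at hgs
        exact h' ((mul_eq_zero.1 hgs).resolve_left hg)
      · rw [zero_mul] at hgt
        exact h' ((mul_eq_zero.1 hgt).resolve_left hg)
    have hs : s = (g' / g) * s' := by
      field_simp
      linear_combination hgs
    have ht : t = (g' / g) * t' := by
      field_simp
      linear_combination hgt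
    rw [hs, ht, auxQ_T_smul (div_ne_zero hg' hg)]
  rcases hab with h' | h'
  · exact key a a' h' e1' e2'
  · exact key b b' h' e3' e4'

/-- The intersection of a transversal with `A00`. -/
lemma auxQ_T_inf_A00
    (hind : ∀ a b c d : K, a • e0 + b • e1 + c • f0 + d • f1 = 0 → a = 0 ∧ b = 0 ∧ c = 0 ∧ d = 0)
    (hA00 : A00 = span K {e0, e1}) {s t : K} (hst : s ≠ 0 ∨ t ≠ 0) :
    auxQ_T e0 e1 f0 f1 s t ⊓ A00 = K ∙ (s • e0 + t • e1) := by
  apply le_antisymm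
  · rintro x hx
    obtain ⟨hxT, hxA⟩ := Submodule.mem_inf.1 hx
    obtain ⟨a, b, hx1⟩ := auxQ_mem_T_iff.1 hxT
    obtain ⟨m, n, hx2⟩ := mem_span_pair.1 (hA00 ▸ hxA)
    have hcoord : (a * s) • e0 + (a * t) • e1 + (b * s) • f0 + (b * t) • f1 =
        m • e0 + n • e1 + (0:K) • f0 + (0:K) • f1 := by
      rw [← hx1, ← hx2]; module
    obtain ⟨-, -, h3, h4⟩ := auxQ_vec_inj hind hcoord
    have hb : b = 0 := by
      rcases hst with h' | h'
      · exact (mul_eq_zero.1 h3).resolve_right h'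
      · exact (mul_eq_zero.1 h4).resolve_right h'
    exact mem_span_singleton.2 ⟨a, by rw [hx1, hb]; module⟩
  · rw [span_singleton_le_iff_mem]
    refine Submodule.mem_inf.2 ⟨auxQ_mem_T_iff.2 ⟨1, 0, by module⟩,
      hA00 ▸ mem_span_pair.2 ⟨s, t, rfl⟩⟩

end Points

section Proj
variable {K : Type*} [Field K] {e0 e1 f0 f1 : Fin 4 → K} {A00 A10 A01 : Subsp K}

lemma auxQ_proj_mp
    (hind : ∀ a b c d : K, a • e0 + b • e1 + c • f0 + d • f1 = 0 → a = 0 ∧ b = 0 ∧ c = 0 ∧ d = 0)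
    (hA01 : A01 = span K {e0 + f0, e1 + f1}) {s t u v a b c d : K} {x y : Fin 4 → K}
    (hx : x = (a * s) • e0 + (a * t) • e1 + (b * s) • f0 + (b * t) • f1)
    (hy : y = (c * u) • e0 + (c * v) • e1 + (d * u) • f0 + (d * v) • f1)
    (hcd : c ≠ d) (huv : u ≠ 0 ∨ v ≠ 0)
    (hmem : y ∈ (K ∙ x) ⊔ A01) :
    (K ∙ (s • e0 + t • e1)) = K ∙ (u • e0 + v • e1) := by
  obtain ⟨y1, hy1, z, hz, hsum⟩ := Submodule.mem_sup.1 hmem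
  obtain ⟨α, rfl⟩ := mem_span_singleton.1 hy1
  rw [hA01] at hz
  obtain ⟨m, n, hz'⟩ := mem_span_pair.1 hz
  have hcoord : (c * u) • e0 + (c * v) • e1 + (d * u) • f0 + (d * v) • f1 =
      (α * (a * s) + m) • e0 + (α * (a * t) + n) • e1 +
        (α * (b * s) + m) • f0 + (α * (b * t) + n) • f1 := by
    calc (c * u) • e0 + (c * v) • e1 + (d * u) • f0 + (d * v) • f1 = y := hy.symm
      _ = α • x + z := hsum.symm
      _ = α • x + (m • (e0 + f0) + n • (e1 + f1)) := by rw [hz']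
      _ = _ := by rw [hx]; module
  obtain ⟨h1, h2, h3, h4⟩ := auxQ_vec_inj hind hcoord
  have hcd' : c - d ≠ 0 := sub_ne_zero.2 hcd
  have hu : u = (α * (a - b) / (c - d)) * s := by
    field_simp
    linear_combination h1 - h3
  have hv : v = (α * (a - b) / (c - d)) * t := by
    field_simp
    linear_combination h2 - h4
  have hk : α * (a - b) / (c - d) ≠ 0 := by
    intro h
    rcases huv with h' | h'
    · exact h' (by rw [hu, h, zero_mul])
    · exact h' (by rw [hv, h, zero_mul])
  rw [hu, hv, show ((α * (a - b) / (c - d)) * s) • e0 + ((α * (a - b) / (c - d)) * t) • e1 =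
    (α * (a - b) / (c - d)) • (s • e0 + t • e1) by module,
    span_singleton_smul_eq (isUnit_iff_ne_zero.2 hk)]

lemma auxQ_proj_mpr
    (hind : ∀ a b c d : K, a • e0 + b • e1 + c • f0 + d • f1 = 0 → a = 0 ∧ b = 0 ∧ c = 0 ∧ d = 0)
    (hA01 : A01 = span K {e0 + f0, e1 + f1}) {s t u v a b c d : K} {x y : Fin 4 → K}
    (hx : x = (a * s) • e0 + (a * t) • e1 + (b * s) • f0 + (b * t) • f1)
    (hy : y = (c * u) • e0 + (c * v) • e1 + (d * u) • f0 + (d * v) • f1)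
    (hab : a ≠ b)
    (hspan : (K ∙ (s • e0 + t • e1)) = K ∙ (u • e0 + v • e1)) :
    y ∈ (K ∙ x) ⊔ A01 := by
  obtain ⟨z, hz⟩ := Submodule.span_singleton_eq_span_singleton.1 hspan
  set k : K := (z : K) with hkdef
  have hzc : (k * s) • e0 + (k * t) • e1 + (0 : K) • f0 + (0 : K) • f1 =
      u • e0 + v • e1 + (0 : K) • f0 + (0 : K) • f1 := by
    calc (k * s) • e0 + (k * t) • e1 + (0 : K) • f0 + (0 : K) • f1
        = z • (s • e0 + t • e1) := by rw [Units.smul_def]; module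
      _ = u • e0 + v • e1 := hz
      _ = _ := by module
  obtain ⟨hu, hv, -, -⟩ := auxQ_vec_inj hind hzc
  have hab' : a - b ≠ 0 := sub_ne_zero.2 hab
  obtain ⟨α, hα⟩ : ∃ α : K, α * (a - b) = k * (c - d) := ⟨k * (c - d) / (a - b), by field_simp⟩
  have key : y = α • x + ((s * (k * c - α * a)) • (e0 + f0) + (t * (k * c - α * a)) • (e1 + f1)) := by
    rw [hy, hx, ← hu, ← hv]
    rw [show c * (k * s) = α * (a * s) + s * (k * c - α * a) from by ring,
      show c * (k * t) = α * (a * t) + t * (k * c - α * a) from by ring,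
      show d * (k * s) = α * (b * s) + s * (k * c - α * a) from by linear_combination s * hα,
      show d * (k * t) = α * (b * t) + t * (k * c - α * a) from by linear_combination t * hα]
    module
  rw [key]
  exact add_mem_sup (smul_mem _ α (mem_span_singleton_self x))
    (by rw [hA01]; exact mem_span_pair.2 ⟨_, _, rfl⟩)

end Proj

section FrameExists
variable {K : Type*} [Field K]

lemma auxQ_exists_frame (A00 A10 A01 : Subsp K)
    (h00 : isLine A00) (h10 : isLine A10) (h01 : isLine A01)
    (hs1 : skew A00 A10) (hs2 : skew A00 A01) (hs3 : skew A10 A01) :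
    ∃ e0 e1 f0 f1 : Fin 4 → K,
      (∀ a b c d : K, a • e0 + b • e1 + c • f0 + d • f1 = 0 → a = 0 ∧ b = 0 ∧ c = 0 ∧ d = 0) ∧
      A00 = span K {e0, e1} ∧ A10 = span K {f0, f1} ∧ A01 = span K {e0 + f0, e1 + f1} := by
  have htop : A00 ⊔ A10 = ⊤ := by
    apply Submodule.eq_top_of_finrank_eq
    have h := Submodule.finrank_sup_add_finrank_inf_eq A00 A10
    rw [hs1, finrank_bot] at h
    rw [Module.finrank_fin_fun]
    rw [h00] at h
    rw [h10] at h
    omega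
  obtain ⟨bw⟩ : Nonempty (Module.Basis (Fin 2) K ↥A01) := ⟨Module.finBasisOfFinrankEq K ↥A01 h01⟩
  set w0 : Fin 4 → K := (bw 0 : Fin 4 → K) with hw0def
  set w1 : Fin 4 → K := (bw 1 : Fin 4 → K) with hw1def
  have hw0A : w0 ∈ A01 := (bw 0).2
  have hw1A : w1 ∈ A01 := (bw 1).2
  have hwind : ∀ a b : K, a • w0 + b • w1 = 0 → a = 0 ∧ b = 0 := by
    intro a b h
    have h' : a • bw 0 + b • bw 1 = 0 := by
      apply Subtype.ext
      push_cast
      rw [hw0def, hw1def] at h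
      exact h
    have hli := bw.linearIndependent
    rw [Fintype.linearIndependent_iff] at hli
    have hsum : ∑ i : Fin 2, ![a, b] i • bw i = a • bw 0 + b • bw 1 := by
      rw [Fin.sum_univ_two, Matrix.cons_val_zero, Matrix.cons_val_one, Matrix.cons_val_zero]
    have := hli ![a, b] (hsum.trans h')
    exact ⟨this 0, this 1⟩
  obtain ⟨e0, he0, f0, hf0, hw0⟩ := Submodule.mem_sup.1 (htop ▸ Submodule.mem_top (x := w0))
  obtain ⟨e1, he1, f1, hf1, hw1⟩ := Submodule.mem_sup.1 (htop ▸ Submodule.mem_top (x := w1))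
  have hind : ∀ a b c d : K,
      a • e0 + b • e1 + c • f0 + d • f1 = 0 → a = 0 ∧ b = 0 ∧ c = 0 ∧ d = 0 := by
    intro a b c d h
    have hkey : a • w0 + b • w1 = (a - c) • f0 + (b - d) • f1 := by
      have h2 : a • w0 + b • w1 - ((a - c) • f0 + (b - d) • f1) =
          a • e0 + b • e1 + c • f0 + d • f1 := by
        rw [← hw0, ← hw1]; module
      rw [h] at h2
      exact sub_eq_zero.1 h2
    have hmem : (a - c) • f0 + (b - d) • f1 ∈ A10 ⊓ A01 :=
      Submodule.mem_inf.2 ⟨add_mem (smul_mem _ _ hf0) (smul_mem _ _ hf1),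
        hkey ▸ add_mem (smul_mem _ _ hw0A) (smul_mem _ _ hw1A)⟩
    rw [hs3, Submodule.mem_bot] at hmem
    obtain ⟨ha, hb⟩ := hwind a b (by rw [hkey, hmem])
    subst ha; subst hb
    have hcd : c • f0 + d • f1 = 0 := by
      have := h
      rw [show (0:K) • e0 + (0:K) • e1 + c • f0 + d • f1 = c • f0 + d • f1 by module] at this
      exact this
    have hkey2 : c • w0 + d • w1 = c • e0 + d • e1 := by
      have h2 : c • w0 + d • w1 - (c • e0 + d • e1) = c • f0 + d • f1 := by
        rw [← hw0, ← hw1]; module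
      rw [hcd] at h2
      exact sub_eq_zero.1 h2
    have hmem2 : c • e0 + d • e1 ∈ A00 ⊓ A01 :=
      Submodule.mem_inf.2 ⟨add_mem (smul_mem _ _ he0) (smul_mem _ _ he1),
        hkey2 ▸ add_mem (smul_mem _ _ hw0A) (smul_mem _ _ hw1A)⟩
    rw [hs2, Submodule.mem_bot] at hmem2
    obtain ⟨hc, hd⟩ := hwind c d (by rw [hkey2, hmem2])
    exact ⟨rfl, rfl, hc, hd⟩
  refine ⟨e0, e1, f0, f1, hind, ?_, ?_, ?_⟩
  · symm
    apply Submodule.eq_of_le_of_finrank_eq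
    · rw [span_le]
      rintro x (rfl | rfl)
      · exact he0
      · exact he1
    · rw [auxQ_finrank_span_pair, h00]
      intro a b h
      have := hind a b 0 0 (by
        rw [show a • e0 + b • e1 + (0:K) • f0 + (0:K) • f1 = a • e0 + b • e1 by module, h])
      exact ⟨this.1, this.2.1⟩
  · symm
    apply Submodule.eq_of_le_of_finrank_eq
    · rw [span_le]
      rintro x (rfl | rfl)
      · exact hf0
      · exact hf1
    · rw [auxQ_finrank_span_pair, h10]
      intro a b h
      have := hind 0 0 a b (by
        rw [show (0:K) • e0 + (0:K) • e1 + a • f0 + b • f1 = a • f0 + b • f1 by module, h])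
      exact ⟨this.2.2.1, this.2.2.2⟩
  · symm
    apply Submodule.eq_of_le_of_finrank_eq
    · rw [span_le]
      rintro x (rfl | rfl)
      · exact hw0 ▸ hw0A
      · exact hw1 ▸ hw1A
    · rw [auxQ_finrank_span_pair, h01]
      intro a b h
      have := hind a b a b (by
        rw [show a • e0 + b • e1 + a • f0 + b • f1 = a • (e0 + f0) + b • (e1 + f1) by module, h])
      exact ⟨this.1, this.2.1⟩

end FrameExists

/-- On the doubly ruled quadric through the pairwise skew lines A00, A10, A01
(rulings of one family): through each point of the quadric off these lines
there passes a unique ruling B of the other family, meeting A00 in a point b;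
and two points p, q of the quadric correspond under projection from the
center A01 if and only if they determine the same point b on A00. -/
theorem quadric_ruling_correspondence (h2 : (2 : K) ≠ 0)
    (A00 A10 A01 : Subsp K)
    (h00 : isLine A00) (h10 : isLine A10) (h01 : isLine A01)
    (hs1 : skew A00 A10) (hs2 : skew A00 A01) (hs3 : skew A10 A01) :
    (∀ p ∈ quadPts A00 A10 A01, ¬ p ≤ A00 → ¬ p ≤ A10 → ¬ p ≤ A01 →
      (∃! B : Subsp K, B ∈ transv3 A00 A10 A01 ∧ p ≤ B) ∧
      (∀ B ∈ transv3 A00 A10 A01, p ≤ B → isPoint (B ⊓ A00))) ∧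
    (∀ π₁ π₂ : Subsp K, isPlane π₁ → isPlane π₂ →
      ∀ p ∈ quadPts A00 A10 A01, ∀ q ∈ quadPts A00 A10 A01,
      p ≤ π₁ → q ≤ π₂ → ¬ p ≤ A01 → ¬ q ≤ A01 →
      ∀ Bp ∈ transv3 A00 A10 A01, ∀ Bq ∈ transv3 A00 A10 A01,
      p ≤ Bp → q ≤ Bq →
      (q ≤ p ⊔ A01 ↔ Bp ⊓ A00 = Bq ⊓ A00)) := by
  obtain ⟨e0, e1, f0, f1, hind, hA00, hA10, hA01⟩ :=
    auxQ_exists_frame A00 A10 A01 h00 h10 h01 hs1 hs2 hs3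
  constructor
  · intro p hp _ _ _
    obtain ⟨s, t, hst, hpT⟩ := auxQ_quad_point_rep hind hA00 hA10 hA01 hp
    have hpt : isPoint p := hp.1
    obtain ⟨x, hxp, hx0⟩ := auxQ_point_exists hpt
    constructor
    · refine ⟨auxQ_T e0 e1 f0 f1 s t,
        ⟨(auxQ_transv_iff hind hA00 hA10 hA01).2 ⟨s, t, hst, rfl⟩, hpT⟩, ?_⟩
      rintro B ⟨hB, hpB⟩
      obtain ⟨s', t', hst', rfl⟩ := (auxQ_transv_iff hind hA00 hA10 hA01).1 hB
      exact auxQ_transv_unique hind hst' hst hx0 (hpB hxp) (hpT hxp)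
    · intro B hB hpB
      obtain ⟨s', t', hst', rfl⟩ := (auxQ_transv_iff hind hA00 hA10 hA01).1 hB
      rw [isPoint, auxQ_T_inf_A00 hind hA00 hst',
        finrank_span_singleton (auxQ_gen_ne_zero hind hst')]
  · intro π₁ π₂ _ _ p hp q hq _ _ hpA01 hqA01 Bp hBp Bq hBq hpBp hqBq
    obtain ⟨s, t, hst, rfl⟩ := (auxQ_transv_iff hind hA00 hA10 hA01).1 hBp
    obtain ⟨u, v, huv, rfl⟩ := (auxQ_transv_iff hind hA00 hA10 hA01).1 hBq
    have hpt : isPoint p := hp.1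
    have hqt : isPoint q := hq.1
    obtain ⟨x, hxp, hx0⟩ := auxQ_point_exists hpt
    obtain ⟨y, hyq, hy0⟩ := auxQ_point_exists hqt
    obtain ⟨a, b, hx⟩ := auxQ_mem_T_iff.1 (hpBp hxp)
    obtain ⟨c, d, hy⟩ := auxQ_mem_T_iff.1 (hqBq hyq)
    have hpx : p = K ∙ x := auxQ_point_eq_span hpt hxp hx0
    have hqy : q = K ∙ y := auxQ_point_eq_span hqt hyq hy0
    have hab : a ≠ b := by
      rintro rfl
      apply hpA01
      rw [hpx, span_singleton_le_iff_mem, hA01]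
      exact mem_span_pair.2 ⟨a * s, a * t, by rw [hx]; module⟩
    have hcd : c ≠ d := by
      rintro rfl
      apply hqA01
      rw [hqy, span_singleton_le_iff_mem, hA01]
      exact mem_span_pair.2 ⟨c * u, c * v, by rw [hy]; module⟩
    rw [auxQ_T_inf_A00 hind hA00 hst, auxQ_T_inf_A00 hind hA00 huv]
    constructor
    · intro hle
      have hymem : y ∈ (K ∙ x) ⊔ A01 := by
        have h' := hle hyq
        rwa [hpx] at h'
      exact auxQ_proj_mp hind hA01 hx hy hcd huv hymem
    · intro hspan
      rw [hqy, span_singleton_le_iff_mem, hpx]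
      exact auxQ_proj_mpr hind hA01 hx hy hab hspan
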